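/- arXiv:2201.13034 — 4 statements merged into one kernel-verified Lean document; each statement's English description precedes it below -/
import Mathlib

section
/- For the elementary transvection t_{i,j}(ξ) = e + ξ e_{i,j} with i ≠ j, its m-th exterior power equals the product over all (m−1)-element subsets L of [n] \ {i,j} of elementary transvections t_{L∪{i}, L∪{j}}(sign(L,i)·sign(L,j)·ξ) in GL_N(R); in particular all these factors commute and Λ^m(t_{i,j}(ξ)) − e has rank at most binomial(n−2, m−1). -/
open Matrix

/-- Index type: `m`-element subsets of `{1,…,n}`. -/
abbrev ExtIdx (n m : ℕ) := {s : Finset (Fin n) // s.card = m}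

/-- The `m`-th exterior power of a matrix: the matrix of its `m × m` minors,
rows and columns indexed by `m`-element subsets in increasing order. -/
def extPow (R : Type) [CommRing R] (n m : ℕ) (g : Matrix (Fin n) (Fin n) R) :
    Matrix (ExtIdx n m) (ExtIdx n m) R :=
  Matrix.of fun I J =>
    (Matrix.of fun a b : Fin m =>
      g (I.1.orderIsoOfFin I.2 a) (J.1.orderIsoOfFin J.2 b)).det

/-- An elementary transvection `e + ξ e_{i,j}` as an element of `GL`. -/
def tGL (R : Type) [CommRing R] {ι : Type} [Fintype ι] [DecidableEq ι]
    (i j : ι) (hij : i ≠ j) (ξ : R) : GL ι R where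
  val := Matrix.transvection i j ξ
  inv := Matrix.transvection i j (-ξ)
  val_inv := by
    rw [Matrix.transvection_mul_transvection_same i j hij]; simp
  inv_val := by
    rw [Matrix.transvection_mul_transvection_same i j hij]; simp

/-- The elementary group `E(R)` generated by all elementary transvections. -/
def elemGL (R : Type) [CommRing R] (ι : Type) [Fintype ι] [DecidableEq ι] :
    Subgroup (GL ι R) :=
  Subgroup.closure {x | ∃ i j, ∃ hij : i ≠ j, ∃ ξ : R, x = tGL R i j hij ξ}

/-- `E(A)`: the subgroup generated by elementary transvections with parameter in `A`. -/
def elemGLIdeal (R : Type) [CommRing R] (ι : Type) [Fintype ι] [DecidableEq ι]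
    (A : Ideal R) : Subgroup (GL ι R) :=
  Subgroup.closure {x | ∃ i j, ∃ hij : i ≠ j, ∃ ξ : R, ξ ∈ A ∧ x = tGL R i j hij ξ}

/-- The smallest subgroup containing `K` and normalized by `H`:
the normal closure of `K` under conjugation by `H`. -/
def conjClosureBy {G : Type*} [Group G] (K H : Subgroup G) : Subgroup G :=
  Subgroup.closure {x | ∃ h ∈ H, ∃ y ∈ K, x = h * y * h⁻¹}

/-- The relative elementary subgroup `E(R, A) = E(A)^{E(R)}`. -/
def relElem (R : Type) [CommRing R] (ι : Type) [Fintype ι] [DecidableEq ι]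
    (A : Ideal R) : Subgroup (GL ι R) :=
  conjClosureBy (elemGLIdeal R ι A) (elemGL R ι)

/-- `Λ^m E_n(R)`: the exterior power of the elementary group, the subgroup of
`GL_N(R)` generated by the exterior powers of elementary transvections. -/
def extElem (R : Type) [CommRing R] (n m : ℕ) : Subgroup (GL (ExtIdx n m) R) :=
  Subgroup.closure {x | ∃ i j, ∃ _ : i ≠ j, ∃ ξ : R,
    (x : Matrix (ExtIdx n m) (ExtIdx n m) R) = extPow R n m (Matrix.transvection i j ξ)}

/-- `sign(L, i)`: the sign of the permutation sorting the list `(L, i)`. -/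
def signLI (R : Type) [CommRing R] {n : ℕ} (L : Finset (Fin n)) (i : Fin n) : R :=
  (-1 : R) ^ (L.filter fun l => i < l).card

/-- Replacing the element `i ∈ I` by `j ∉ I` in an `m`-element subset. -/
def swapIdx {n m : ℕ} (I : ExtIdx n m) (i j : Fin n) (hi : i ∈ I.1) (hj : j ∉ I.1) :
    ExtIdx n m :=
  ⟨insert j (I.1.erase i), by
    have h1 : j ∉ I.1.erase i := fun h => hj (Finset.mem_of_mem_erase h)
    have h2 : 1 ≤ m := I.2 ▸ Finset.card_pos.mpr ⟨i, hi⟩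
    rw [Finset.card_insert_of_notMem h1, Finset.card_erase_of_mem hi, I.2]
    omega⟩

/-- Reduction of `GL` along a ring homomorphism. -/
def glMap {ι : Type} [Fintype ι] [DecidableEq ι] {S S' : Type} [CommRing S] [CommRing S']
    (f : S →+* S') : GL ι S →* GL ι S' :=
  Units.map (RingHom.mapMatrix f).toMonoidHom



lemma transvection_commute {ι : Type*} [DecidableEq ι] [Fintype ι] {R : Type} [CommRing R]
    (a b a' b' : ι) (c c' : R) (h1 : b ≠ a') (h2 : b' ≠ a) :
    Commute (Matrix.transvection a b c) (Matrix.transvection a' b' c') := by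
  show _ * _ = _ * _
  have e1 : single a b c * single a' b' c' = 0 := Matrix.single_mul_single_of_ne (i := a) (j := b) (k := a') (h := h1) (d := c') (c := c)
  have e2 : single a' b' c' * single a b c = 0 := Matrix.single_mul_single_of_ne (i := a') (j := b') (k := a) (h := h2) (d := c) (c := c')
  simp only [Matrix.transvection, add_mul, mul_add, one_mul, mul_one,
    e1, e2]
  abel

lemma pos_index {n k : ℕ} (I : Finset (Fin n)) (h : I.card = k) (a1 : Fin k)
    : (I.filter (· < I.orderEmbOfFin h a1)).card = (a1 : ℕ) := by
  set e := I.orderEmbOfFin h with he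
  have himg : I.filter (· < e a1) = (Finset.Iio a1).image (fun a => e a) := by
    ext y
    simp only [Finset.mem_filter, Finset.mem_image, Finset.mem_Iio]
    constructor
    · rintro ⟨hyI, hy⟩
      have : y ∈ Set.range e := by rw [Finset.range_orderEmbOfFin]; exact hyI
      obtain ⟨a, rfl⟩ := this
      exact ⟨a, (e.strictMono.lt_iff_lt).1 hy, rfl⟩
    · rintro ⟨a, ha, rfl⟩
      exact ⟨Finset.orderEmbOfFin_mem I h a, e.strictMono ha⟩
  rw [himg, Finset.card_image_of_injective _ e.injective, Fin.card_Iio]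

lemma filter_lt_add_filter_gt {n : ℕ} (L : Finset (Fin n)) (x : Fin n) (hx : x ∉ L) :
    (L.filter (· < x)).card + (L.filter (x < ·)).card = L.card := by
  have h2 : L.filter (fun l => ¬ l < x) = L.filter (x < ·) := by
    ext l
    simp only [Finset.mem_filter, not_lt, and_congr_right_iff]
    intro hl
    constructor
    · intro hle; exact lt_of_le_of_ne hle (fun hxx => hx (hxx ▸ hl))
    · exact le_of_lt
  rw [← h2, Finset.card_filter_add_card_filter_not]

lemma extPow_transvection_entry (R : Type) [CommRing R] {n m : ℕ} (hm1 : 1 ≤ m)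
    {i j : Fin n} (hij : i ≠ j) (ξ : R) (I J : ExtIdx n m) :
    extPow R n m (Matrix.transvection i j ξ) I J =
      (if I = J then 1 else 0) +
      (if i ∈ I.1 ∧ j ∉ I.1 ∧ J.1 = insert j (I.1.erase i)
        then signLI R (I.1.erase i) i * signLI R (I.1.erase i) j * ξ else 0) := by
  classical
  obtain ⟨m', rfl⟩ : ∃ m', m = m' + 1 := ⟨m - 1, by omega⟩
  set e := I.1.orderEmbOfFin I.2 with hee
  set f := J.1.orderEmbOfFin J.2 with hff
  set M : Matrix (Fin (m'+1)) (Fin (m'+1)) R :=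
    Matrix.of fun a b => Matrix.transvection i j ξ (e a) (f b) with hM
  have hLHS : extPow R n (m'+1) (Matrix.transvection i j ξ) I J = M.det := rfl
  have hMab : ∀ a b, M a b = (if (e a : Fin n) = f b then 1 else 0) +
      (if i = e a ∧ j = f b then ξ else 0) := by
    intro a b
    simp [hM, Matrix.transvection, Matrix.one_apply, Matrix.single]
  have hesurj : ∀ x ∈ I.1, ∃ a, e a = x := by
    intro x hx
    have h := Finset.range_orderEmbOfFin I.1 I.2
    rw [Set.ext_iff] at h
    exact (h x).2 hx
  have hfsurj : ∀ x ∈ J.1, ∃ b, f b = x := by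
    intro x hx
    have h := Finset.range_orderEmbOfFin J.1 J.2
    rw [Set.ext_iff] at h
    exact (h x).2 hx
  rw [hLHS]
  by_cases hIJ : I = J
  · -- diagonal case
    subst hIJ
    rw [if_pos rfl, if_neg ?_]
    swap
    · rintro ⟨hi, hj, hJ⟩
      exact hj (hJ ▸ Finset.mem_insert_self j _)
    rw [add_zero]
    have hef : f = e := by rw [hee, hff]
    by_cases hi : i ∈ I.1
    · by_cases hj : j ∈ I.1
      · obtain ⟨a1, ha1⟩ := hesurj i hi
        obtain ⟨b1, hb1⟩ := hesurj j hj
        have hab : a1 ≠ b1 := fun h => hij (by rw [← ha1, ← hb1, h])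
        have : M = Matrix.transvection a1 b1 ξ := by
          ext a b
          rw [hMab a b, Matrix.transvection, hef]
          simp only [Matrix.add_apply, Matrix.one_apply, Matrix.single,
            Matrix.of_apply]
          congr 1
          · simp [e.injective.eq_iff]
          · refine if_congr ?_ rfl rfl
            constructor
            · rintro ⟨h1, h2⟩
              exact ⟨e.injective (by rw [← h1, ha1]), e.injective (by rw [← h2, hb1])⟩
            · rintro ⟨rfl, rfl⟩; exact ⟨ha1.symm, hb1.symm⟩
        rw [this, Matrix.det_transvection_of_ne _ _ hab]
      · have : M = 1 := by
          ext a b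
          rw [hMab a b, hef, Matrix.one_apply]
          have : ¬ (i = e a ∧ j = e b) := by
            rintro ⟨_, h2⟩
            exact hj (h2 ▸ Finset.orderEmbOfFin_mem I.1 I.2 b)
          rw [if_neg this, add_zero]
          simp [e.injective.eq_iff]
        rw [this, Matrix.det_one]
    · have : M = 1 := by
        ext a b
        rw [hMab a b, hef, Matrix.one_apply]
        have : ¬ (i = e a ∧ j = e b) := by
          rintro ⟨h1, _⟩
          exact hi (h1 ▸ Finset.orderEmbOfFin_mem I.1 I.2 a)
        rw [if_neg this, add_zero]
        simp [e.injective.eq_iff]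
      rw [this, Matrix.det_one]
  · rw [if_neg hIJ, zero_add]
    -- pick x ∈ I \ J
    have hnsub : ¬ I.1 ⊆ J.1 := by
      intro hsub
      exact hIJ (Subtype.ext (Finset.eq_of_subset_of_card_le hsub (by rw [I.2, J.2])))
    obtain ⟨x, hxI, hxJ⟩ := Finset.not_subset.1 hnsub
    obtain ⟨ax, hax⟩ := hesurj x hxI
    by_cases hjJ : j ∈ J.1
    swap
    · -- j ∉ J : row ax is zero
      rw [if_neg ?_]
      swap
      · rintro ⟨hi, hj, hJ⟩
        exact hjJ (hJ ▸ Finset.mem_insert_self j _)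
      apply Matrix.det_eq_zero_of_row_eq_zero ax
      intro b
      rw [hMab ax b, hax]
      have h1 : x ≠ (f b : Fin n) := fun h => hxJ (h ▸ Finset.orderEmbOfFin_mem J.1 J.2 b)
      have h2 : ¬ (i = x ∧ j = f b) := by
        rintro ⟨_, h2⟩
        exact hjJ (h2 ▸ Finset.orderEmbOfFin_mem J.1 J.2 b)
      rw [if_neg h1, if_neg h2, add_zero]
    · -- j ∈ J
      obtain ⟨b0, hb0⟩ := hfsurj j hjJ
      set A : Matrix (Fin (m'+1)) (Fin (m'+1)) R :=
        Matrix.of fun a b => if (e a : Fin n) = f b then (1:R) else 0 with hA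
      set u : Fin (m'+1) → R := fun a => if (e a : Fin n) = i then (1:R) else 0 with hu
      have hdetA : A.det = 0 := by
        apply Matrix.det_eq_zero_of_row_eq_zero ax
        intro b
        have h1 : ¬ (e ax : Fin n) = f b := by
          rw [hax]; exact fun h => hxJ (h ▸ Finset.orderEmbOfFin_mem J.1 J.2 b)
        simp [hA, h1]
      have hMdecomp : M = A.updateCol b0 ((fun a => A a b0) + ξ • u) := by
        ext a b
        rw [Matrix.updateCol_apply, hMab a b]
        by_cases hb : b = b0
        · subst hb
          rw [if_pos rfl]
          simp only [Pi.add_apply, Pi.smul_apply, smul_eq_mul, hA, hu, Matrix.of_apply]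
          congr 1
          rw [mul_ite, mul_one, mul_zero]
          exact if_congr ⟨fun h => h.1.symm, fun h => ⟨h.symm, hb0.symm⟩⟩ rfl rfl
        · rw [if_neg hb]
          have h2 : ¬ (i = e a ∧ j = f b) := by
            rintro ⟨_, h2⟩
            exact hb (f.injective (by rw [← h2, hb0]))
          simp [hA, h2]
      set A' := A.updateCol b0 u with hA'
      have hdet : M.det = ξ * A'.det := by
        rw [hMdecomp, Matrix.det_updateCol_add, Matrix.updateCol_eq_self,
          Matrix.det_updateCol_smul, hdetA, zero_add, ← hA']
      rw [hdet]
      by_cases hiI : i ∈ I.1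
      swap
      · rw [if_neg (fun h => hiI h.1)]
        have : A'.det = 0 := by
          apply Matrix.det_eq_zero_of_column_eq_zero b0
          intro a
          have : ¬ (e a : Fin n) = i := fun h => hiI (h ▸ Finset.orderEmbOfFin_mem I.1 I.2 a)
          simp [hA', Matrix.updateCol_apply, hu, this]
        rw [this, mul_zero]
      · obtain ⟨a1, ha1⟩ := hesurj i hiI
        by_cases hiJ : i ∈ J.1
        · -- two equal columns
          rw [if_neg ?_]
          swap
          · rintro ⟨_, hj, hJ⟩
            rw [hJ] at hiJ
            rcases Finset.mem_insert.1 hiJ with h | h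
            · exact hij h
            · exact (Finset.notMem_erase i I.1) h
          obtain ⟨b1, hb1⟩ := hfsurj i hiJ
          have hb01 : b0 ≠ b1 := fun h => hij (by rw [← hb0, h, hb1])
          have : A'.det = 0 := by
            apply Matrix.det_zero_of_column_eq hb01
            intro a
            simp [hA', Matrix.updateCol_apply, Ne.symm hb01, hu, hA, hb1]
          rw [this, mul_zero]
        · by_cases hE : J.1.erase j = I.1.erase i
          swap
          · -- zero row
            rw [if_neg ?_]
            swap
            · rintro ⟨_, hj, hJ⟩
              apply hE
              rw [hJ, Finset.erase_insert]
              exact fun h => hj (Finset.mem_of_mem_erase h)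
            have hcard : (I.1.erase i).card = (J.1.erase j).card := by
              rw [Finset.card_erase_of_mem hiI, Finset.card_erase_of_mem hjJ, I.2, J.2]
            have hnsub2 : ¬ I.1.erase i ⊆ J.1.erase j := by
              intro hsub
              exact hE (Finset.eq_of_subset_of_card_le hsub (le_of_eq hcard.symm)).symm
            obtain ⟨y, hyI, hyJ⟩ := Finset.not_subset.1 hnsub2
            obtain ⟨ay, hay⟩ := hesurj y (Finset.mem_of_mem_erase hyI)
            have : A'.det = 0 := by
              apply Matrix.det_eq_zero_of_row_eq_zero ay
              intro b
              rw [hA', Matrix.updateCol_apply]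
              by_cases hb : b = b0
              · rw [if_pos hb, hu]
                have : ¬ (e ay : Fin n) = i := by
                  rw [hay]; exact fun h => (Finset.ne_of_mem_erase hyI) h
                simp [this]
              · rw [if_neg hb, hA]
                have : ¬ (e ay : Fin n) = f b := by
                  rw [hay]
                  intro h
                  apply hyJ
                  refine Finset.mem_erase.2 ⟨?_, h ▸ Finset.orderEmbOfFin_mem J.1 J.2 b⟩
                  intro hyj
                  exact hb (f.injective (by rw [← h, hb0]; exact hyj))
                simp [this]
            rw [this, mul_zero]
          · -- the main diagonal-swap case
            have hjI : j ∉ I.1 := by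
              intro hjI
              have : j ∈ I.1.erase i := Finset.mem_erase.2 ⟨Ne.symm hij, hjI⟩
              rw [← hE] at this
              exact (Finset.notMem_erase j J.1) this
            have hJeq : J.1 = insert j (I.1.erase i) := by
              rw [← hE, Finset.insert_erase hjJ]
            rw [if_pos ⟨hiI, hjI, hJeq⟩]
            set L := I.1.erase i with hL
            have hLcard : L.card = m' := by
              rw [hL, Finset.card_erase_of_mem hiI, I.2]
              omega
            have hsucce : ∀ p : Fin m', e (a1.succAbove p) ∈ L := by
              intro p
              refine Finset.mem_erase.2 ⟨?_, Finset.orderEmbOfFin_mem I.1 I.2 _⟩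
              rw [← ha1]
              exact fun h => Fin.succAbove_ne a1 p (e.injective h)
            have hsuccf : ∀ q : Fin m', f (b0.succAbove q) ∈ L := by
              intro q
              rw [← hE]
              refine Finset.mem_erase.2 ⟨?_, Finset.orderEmbOfFin_mem J.1 J.2 _⟩
              rw [← hb0]
              exact fun h => Fin.succAbove_ne b0 q (f.injective h)
            have hcompe : (fun p : Fin m' => (e (a1.succAbove p) : Fin n))
                = L.orderEmbOfFin hLcard :=
              Finset.orderEmbOfFin_unique hLcard hsucce
                (e.strictMono.comp (Fin.strictMono_succAbove a1))
            have hcompf : (fun q : Fin m' => (f (b0.succAbove q) : Fin n))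
                = L.orderEmbOfFin hLcard :=
              Finset.orderEmbOfFin_unique hLcard hsuccf
                (f.strictMono.comp (Fin.strictMono_succAbove b0))
            have hminor : A'.submatrix a1.succAbove b0.succAbove = 1 := by
              ext p q
              rw [Matrix.submatrix_apply, hA', Matrix.updateCol_apply,
                if_neg (Fin.succAbove_ne b0 q), hA, Matrix.of_apply, Matrix.one_apply]
              have h1 : (e (a1.succAbove p) : Fin n) = L.orderEmbOfFin hLcard p :=
                congrFun hcompe p
              have h2 : (f (b0.succAbove q) : Fin n) = L.orderEmbOfFin hLcard q :=
                congrFun hcompf q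
              rw [h1, h2]
              exact if_congr (L.orderEmbOfFin hLcard).injective.eq_iff rfl rfl
            have hA'b0 : ∀ a, A' a b0 = if a = a1 then 1 else 0 := by
              intro a
              rw [hA', Matrix.updateCol_apply, if_pos rfl, hu]
              refine if_congr ?_ rfl rfl
              rw [← ha1, e.injective.eq_iff]
            have hdetA' : A'.det = (-1 : R) ^ ((a1 : ℕ) + (b0 : ℕ)) := by
              rw [Matrix.det_succ_column A' b0, Finset.sum_eq_single a1]
              · rw [hA'b0, if_pos rfl, hminor, Matrix.det_one]; ring
              · intro a _ ha
                rw [hA'b0, if_neg ha]; ring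
              · intro h; exact absurd (Finset.mem_univ a1) h
            have ha1' : (a1 : ℕ) = (L.filter (· < i)).card := by
              have hpi := pos_index I.1 I.2 a1
              have ha1e : I.1.orderEmbOfFin I.2 a1 = i := ha1
              rw [ha1e] at hpi
              rw [← hpi]
              congr 1
              ext y
              simp only [Finset.mem_filter, hL, Finset.mem_erase]
              constructor
              · rintro ⟨h1, h2⟩; exact ⟨⟨ne_of_lt h2, h1⟩, h2⟩
              · rintro ⟨⟨_, h1⟩, h2⟩; exact ⟨h1, h2⟩
            have hb0' : (b0 : ℕ) = (L.filter (· < j)).card := by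
              have hpj := pos_index J.1 J.2 b0
              have hb0f : J.1.orderEmbOfFin J.2 b0 = j := hb0
              rw [hb0f] at hpj
              rw [← hpj]
              congr 1
              ext y
              simp only [Finset.mem_filter, ← hE, Finset.mem_erase]
              constructor
              · rintro ⟨h1, h2⟩; exact ⟨⟨ne_of_lt h2, h1⟩, h2⟩
              · rintro ⟨⟨_, h1⟩, h2⟩; exact ⟨h1, h2⟩
            have hiL : i ∉ L := Finset.notMem_erase i I.1
            have hjL : j ∉ L := fun h => hjI (Finset.mem_of_mem_erase h)
            have hci := filter_lt_add_filter_gt L i hiL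
            have hcj := filter_lt_add_filter_gt L j hjL
            rw [hLcard] at hci hcj
            rw [hdetA']
            have hsL : ∀ (x : Fin n), signLI R L x = (-1:R)^((L.filter fun l => x < l).card) :=
              fun x => rfl
            rw [hsL, hsL]
            set ci := (L.filter fun l => i < l).card with hcidef
            set cj := (L.filter fun l => j < l).card with hcjdef
            have hsum : (a1:ℕ) + (b0:ℕ) + (ci + cj) = 2 * m' := by omega
            have e1 : (-1:R)^((a1:ℕ)+(b0:ℕ)) * (-1:R)^(ci+cj) = 1 := by
              rw [← pow_add, show (a1:ℕ)+(b0:ℕ)+(ci+cj) = 2*m' from hsum, pow_mul]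
              norm_num
            have e2 : (-1:R)^(ci+cj) * (-1:R)^(ci+cj) = 1 := by
              rw [← pow_add, ← two_mul, pow_mul]; norm_num
            have key : (-1:R)^((a1:ℕ)+(b0:ℕ)) = (-1:R)^ci * (-1:R)^cj := by
              calc (-1:R)^((a1:ℕ)+(b0:ℕ))
                  = (-1:R)^((a1:ℕ)+(b0:ℕ)) * ((-1:R)^(ci+cj) * (-1:R)^(ci+cj)) := by
                    rw [e2, mul_one]
                _ = ((-1:R)^((a1:ℕ)+(b0:ℕ)) * (-1:R)^(ci+cj)) * (-1:R)^(ci+cj) := by ring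
                _ = (-1:R)^(ci+cj) := by rw [e1, one_mul]
                _ = (-1:R)^ci * (-1:R)^cj := by rw [pow_add]
            rw [key]; ring

/-- The exterior power of an elementary transvection `t_{i,j}(ξ)` is the product over
all `(m-1)`-element subsets `L ⊆ [n] \ {i,j}` of the elementary transvections
`t_{L∪i, L∪j}(sign(L,i)·sign(L,j)·ξ)`; all these factors commute, and
`Λ^m t_{i,j}(ξ) - e` has rank at most `(n-2).choose (m-1)`. -/
theorem extPow_transvection_eq_prod (R : Type) [CommRing R] (n m : ℕ)
    (hn : 3 ≤ n) (hm1 : 1 ≤ m) (hmn : m < n)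
    (i j : Fin n) (hij : i ≠ j) (ξ : R) :
    let T : Finset (Fin n) → Matrix (ExtIdx n m) (ExtIdx n m) R := fun L =>
      if h : L.card = m - 1 ∧ i ∉ L ∧ j ∉ L then
        Matrix.transvection
          (⟨insert i L, by rw [Finset.card_insert_of_notMem h.2.1, h.1]; omega⟩ : ExtIdx n m)
          (⟨insert j L, by rw [Finset.card_insert_of_notMem h.2.2, h.1]; omega⟩ : ExtIdx n m)
          (signLI R L i * signLI R L j * ξ)
      else 1
    let 𝓛 : Finset (Finset (Fin n)) :=
      Finset.univ.filter fun L => L.card = m - 1 ∧ i ∉ L ∧ j ∉ L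
    (∀ L ∈ 𝓛, ∀ L' ∈ 𝓛, Commute (T L) (T L')) ∧
    (∀ hc : (𝓛 : Set (Finset (Fin n))).Pairwise (Function.onFun Commute T),
      𝓛.noncommProd T hc = extPow R n m (Matrix.transvection i j ξ)) ∧
    (extPow R n m (Matrix.transvection i j ξ) - 1).rank ≤ (n - 2).choose (m - 1) := by
  intro T 𝓛
  classical
  have hmem : ∀ L : Finset (Fin n), L ∈ 𝓛 ↔ (L.card = m - 1 ∧ i ∉ L ∧ j ∉ L) := by
    intro L
    simp [𝓛, Finset.mem_filter]
  have hT : ∀ (L : Finset (Fin n)) (h : L.card = m - 1 ∧ i ∉ L ∧ j ∉ L),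
      T L = Matrix.transvection
        (⟨insert i L, by rw [Finset.card_insert_of_notMem h.2.1, h.1]; omega⟩ : ExtIdx n m)
        (⟨insert j L, by rw [Finset.card_insert_of_notMem h.2.2, h.1]; omega⟩ : ExtIdx n m)
        (signLI R L i * signLI R L j * ξ) := fun L h => dif_pos h
  -- the identity matrix offsets
  have hsub : ∀ (L : Finset (Fin n)) (h : L.card = m - 1 ∧ i ∉ L ∧ j ∉ L),
      T L - 1 = Matrix.single
        (⟨insert i L, by rw [Finset.card_insert_of_notMem h.2.1, h.1]; omega⟩ : ExtIdx n m)
        (⟨insert j L, by rw [Finset.card_insert_of_notMem h.2.2, h.1]; omega⟩ : ExtIdx n m)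
        (signLI R L i * signLI R L j * ξ) := by
    intro L h
    rw [hT L h, Matrix.transvection, add_sub_cancel_left]
  have hne : ∀ (L L' : Finset (Fin n)), j ∉ L' →
      (insert j L : Finset (Fin n)) ≠ insert i L' := by
    intro L L' hjL' heq
    have : j ∈ insert i L' := heq ▸ Finset.mem_insert_self j L
    rcases Finset.mem_insert.1 this with h | h
    · exact hij h.symm
    · exact hjL' h
  have hXX : ∀ (L : Finset (Fin n)), L ∈ 𝓛 → ∀ (L' : Finset (Fin n)), L' ∈ 𝓛 →
      (T L - 1) * (T L' - 1) = 0 := by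
    intro L hL L' hL'
    obtain h := (hmem L).1 hL
    obtain h' := (hmem L').1 hL'
    rw [hsub L h, hsub L' h']
    apply Matrix.single_mul_single_of_ne
    intro heq
    exact hne L L' h'.2.2 (congrArg Subtype.val heq)
  have hcomm : ∀ L ∈ 𝓛, ∀ L' ∈ 𝓛, Commute (T L) (T L') := by
    intro L hL L' hL'
    obtain h := (hmem L).1 hL
    obtain h' := (hmem L').1 hL'
    rw [hT L h, hT L' h']
    apply transvection_commute
    · exact fun heq => hne L L' h'.2.2 (congrArg Subtype.val heq)
    · exact fun heq => hne L' L h.2.2 (congrArg Subtype.val heq)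
  have hterm : ∀ (L : Finset (Fin n)) (h : L.card = m - 1 ∧ i ∉ L ∧ j ∉ L) (I J : ExtIdx n m),
      (T L - 1) I J = (if I.1 = insert i L then signLI R L i * signLI R L j * ξ else 0) *
        (if J.1 = insert j L then 1 else 0) := by
    intro L h I J
    rw [hsub L h]
    rw [Matrix.single]
    simp only [Matrix.of_apply]
    by_cases h1 : I.1 = insert i L
    · by_cases h2 : J.1 = insert j L
      · rw [if_pos ⟨Subtype.ext h1.symm, Subtype.ext h2.symm⟩, if_pos h1, if_pos h2, mul_one]
      · rw [if_neg (fun hc => h2 (congrArg Subtype.val hc.2).symm), if_neg h2, mul_zero]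
    · rw [if_neg (fun hc => h1 (congrArg Subtype.val hc.1).symm), if_neg h1, zero_mul]
  -- the key matrix identity
  have hkey : extPow R n m (Matrix.transvection i j ξ) = 1 + ∑ L ∈ 𝓛, (T L - 1) := by
    ext I J
    rw [extPow_transvection_entry R hm1 hij ξ I J]
    rw [Matrix.add_apply, Matrix.sum_apply, Matrix.one_apply]
    congr 1
    by_cases hcond : i ∈ I.1 ∧ j ∉ I.1 ∧ J.1 = insert j (I.1.erase i)
    · rw [if_pos hcond]
      set L0 := I.1.erase i with hL0
      have hI0 : I.1 = insert i L0 := (Finset.insert_erase hcond.1).symm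
      have h0 : L0.card = m - 1 ∧ i ∉ L0 ∧ j ∉ L0 := by
        refine ⟨by rw [hL0, Finset.card_erase_of_mem hcond.1, I.2], Finset.notMem_erase i _,
          fun hc => hcond.2.1 (Finset.mem_of_mem_erase hc)⟩
      rw [Finset.sum_eq_single_of_mem L0 ((hmem L0).2 h0)]
      · rw [hterm L0 h0 I J, if_pos hI0, if_pos hcond.2.2, mul_one]
      · intro L hL hLne
        obtain h := (hmem L).1 hL
        rw [hterm L h I J]
        by_cases h1 : I.1 = insert i L
        · exfalso
          apply hLne
          rw [hL0, h1, Finset.erase_insert h.2.1]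
        · rw [if_neg h1, zero_mul]
    · rw [if_neg hcond]
      symm
      apply Finset.sum_eq_zero
      intro L hL
      obtain h := (hmem L).1 hL
      rw [hterm L h I J]
      by_cases h1 : I.1 = insert i L
      · by_cases h2 : J.1 = insert j L
        · exfalso
          apply hcond
          have hiI : i ∈ I.1 := h1 ▸ Finset.mem_insert_self i L
          have hjI : j ∉ I.1 := by
            rw [h1]
            intro hc
            rcases Finset.mem_insert.1 hc with hc | hc
            · exact hij hc.symm
            · exact h.2.2 hc
          have hLe : I.1.erase i = L := by rw [h1, Finset.erase_insert h.2.1]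
          exact ⟨hiI, hjI, by rw [hLe, h2]⟩
        · rw [if_neg h2, mul_zero]
      · rw [if_neg h1, zero_mul]
  -- the product identity
  have hprod : ∀ (s : Finset (Finset (Fin n))), s ⊆ 𝓛 →
      ∀ (hc : (s : Set (Finset (Fin n))).Pairwise (Function.onFun Commute T)),
      s.noncommProd T hc = 1 + ∑ L ∈ s, (T L - 1) := by
    intro s
    induction s using Finset.induction_on with
    | empty => intro _ hc; simp
    | @insert a s ha ih =>
      intro hins hc
      have has : a ∈ 𝓛 := hins (Finset.mem_insert_self a s)
      have hss : s ⊆ 𝓛 := fun x hx => hins (Finset.mem_insert_of_mem hx)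
      rw [Finset.noncommProd_insert_of_notMem s a T hc ha]
      rw [ih hss (hc.mono (by simp [Finset.coe_insert, Set.subset_insert]))]
      have hXa : (T a - 1) * (∑ L ∈ s, (T L - 1)) = 0 := by
        rw [Finset.mul_sum]
        apply Finset.sum_eq_zero
        intro L hL
        exact hXX a has L (hss hL)
      have hTa : T a = 1 + (T a - 1) := by abel
      rw [Finset.sum_insert ha]
      calc T a * (1 + ∑ L ∈ s, (T L - 1))
          = (1 + (T a - 1)) * (1 + ∑ L ∈ s, (T L - 1)) := by rw [← hTa]
        _ = 1 + ((T a - 1) + ∑ L ∈ s, (T L - 1)) + (T a - 1) * (∑ L ∈ s, (T L - 1)) := by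
            noncomm_ring
        _ = 1 + ((T a - 1) + ∑ L ∈ s, (T L - 1)) := by rw [hXa, add_zero]
  refine ⟨hcomm, fun hc => ?_, ?_⟩
  · rw [hprod 𝓛 subset_rfl hc, hkey]
  · -- rank bound
    have hD : extPow R n m (Matrix.transvection i j ξ) - 1 = ∑ L ∈ 𝓛, (T L - 1) := by
      rw [hkey, add_sub_cancel_left]
    set Bm : Matrix (ExtIdx n m) {L // L ∈ 𝓛} R :=
      Matrix.of fun I L' =>
        if I.1 = insert i L'.1 then signLI R L'.1 i * signLI R L'.1 j * ξ else 0 with hBm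
    set Cm : Matrix {L // L ∈ 𝓛} (ExtIdx n m) R :=
      Matrix.of fun L' J => if J.1 = insert j L'.1 then (1 : R) else 0 with hCm
    have hBC : (∑ L ∈ 𝓛, (T L - 1)) = Bm * Cm := by
      ext I J
      rw [Matrix.sum_apply, Matrix.mul_apply]
      have h1 : (∑ L ∈ 𝓛, (T L - 1) I J) = ∑ L ∈ 𝓛,
          ((if I.1 = insert i L then signLI R L i * signLI R L j * ξ else 0) *
           (if J.1 = insert j L then (1:R) else 0)) :=
        Finset.sum_congr rfl (fun L hL => hterm L ((hmem L).1 hL) I J)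
      rw [h1, ← Finset.sum_coe_sort 𝓛 (fun L =>
        (if I.1 = insert i L then signLI R L i * signLI R L j * ξ else 0) *
        (if J.1 = insert j L then (1:R) else 0))]
      exact Finset.sum_congr rfl (fun L' _ => rfl)
    have hcard : Fintype.card {L // L ∈ 𝓛} ≤ (n - 2).choose (m - 1) := by
      rw [Fintype.card_coe]
      have hsubset : 𝓛 ⊆ (Finset.univ \ {i, j}).powersetCard (m - 1) := by
        intro L hL
        obtain h := (hmem L).1 hL
        rw [Finset.mem_powersetCard]
        refine ⟨fun x hx => ?_, h.1⟩
        rw [Finset.mem_sdiff]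
        refine ⟨Finset.mem_univ x, ?_⟩
        intro hc
        rcases Finset.mem_insert.1 hc with hc | hc
        · exact h.2.1 (hc ▸ hx)
        · exact h.2.2 ((Finset.mem_singleton.1 hc) ▸ hx)
      have hcard2 : (Finset.univ \ ({i, j} : Finset (Fin n))).card = n - 2 := by
        rw [Finset.card_sdiff_of_subset (Finset.subset_univ _), Finset.card_univ, Fintype.card_fin]
        have : ({i, j} : Finset (Fin n)).card = 2 := by
          rw [Finset.card_insert_of_notMem (fun hc => hij (Finset.mem_singleton.1 hc)),
            Finset.card_singleton]
        rw [this]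
      calc 𝓛.card ≤ ((Finset.univ \ ({i,j} : Finset (Fin n))).powersetCard (m - 1)).card :=
            Finset.card_le_card hsubset
        _ = (n - 2).choose (m - 1) := by rw [Finset.card_powersetCard, hcard2]
    rw [hD, hBC]
    rcases subsingleton_or_nontrivial R with hR | hR
    · haveI := hR
      have hrank : (Bm * Cm).rank = 1 := by
        rw [Matrix.rank, Module.finrank, rank_subsingleton]
        simp
      rw [hrank]
      exact Nat.choose_pos (by omega)
    · haveI := hR
      exact le_trans (Matrix.rank_mul_le_left Bm Cm)
        (le_trans (Bm.rank_le_card_width) hcard)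
end

section
/- For any g ∈ GL_n(R), det(Λ^m g) = (det g)^{binomial(n−1, m−1)}. -/
open Matrix

section AuxDetExtPow

open Matrix Finset Equiv Equiv.Perm

variable {R : Type} [CommRing R] {k n : ℕ}

local notation "ε " σ:arg => ((Equiv.Perm.sign σ : ℤ) : R)

theorem cb_aux (M : Matrix (Fin k) (Fin n) R) (N : Matrix (Fin n) (Fin k) R)
    {p : Fin k → Fin n} (H : ¬Function.Injective p) :
    (∑ σ : Perm (Fin k), ε σ * ∏ x, M (σ x) (p x) * N (p x) x) = 0 := by
  rw [Function.Injective] at H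
  push_neg at H
  obtain ⟨i, j, hpij, hij⟩ := H
  exact
    sum_involution (fun σ _ => σ * Equiv.swap i j)
      (fun σ _ => by
        have : (∏ x, M (σ x) (p x)) = ∏ x, M ((σ * Equiv.swap i j) x) (p x) :=
          Fintype.prod_equiv (Equiv.swap i j) _ _ (by simp [apply_swap_eq_self hpij])
        simp [this, sign_swap hij, -sign_swap', prod_mul_distrib])
      (fun σ _ _ => (not_congr mul_swap_eq_iff).mpr hij) (fun _ _ => mem_univ _) fun σ _ =>
      mul_swap_involutive i j σ

theorem sum_perm_perm (A B : Matrix (Fin k) (Fin k) R) :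
    ∑ τ : Perm (Fin k), ∑ σ : Perm (Fin k), ε σ * ∏ i, A (σ i) (τ i) * B (τ i) i
      = A.det * B.det := by
  rw [← Matrix.det_mul]
  calc ∑ τ : Perm (Fin k), ∑ σ : Perm (Fin k), ε σ * ∏ i, A (σ i) (τ i) * B (τ i) i
      = ∑ p ∈ univ.filter Function.Bijective,
          ∑ σ : Perm (Fin k), ε σ * ∏ i, A (σ i) (p i) * B (p i) i :=
        (sum_bij (fun p h ↦ Equiv.ofBijective p (mem_filter.1 h).2) (fun _ _ ↦ mem_univ _)
          (fun _ _ _ _ h ↦ by injection h)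
          (fun b _ ↦ ⟨b, mem_filter.2 ⟨mem_univ _, b.bijective⟩, Equiv.coe_fn_injective rfl⟩)
          fun _ _ ↦ rfl).symm
    _ = ∑ p : Fin k → Fin k, ∑ σ : Perm (Fin k), ε σ * ∏ i, A (σ i) (p i) * B (p i) i :=
        sum_subset (filter_subset _ _) fun f _ hbij ↦ Matrix.det_mul_aux (by
          simpa only [true_and, mem_filter, mem_univ] using hbij)
    _ = (A * B).det := by
        simp only [det_apply', Matrix.mul_apply, prod_univ_sum, mul_sum, Fintype.piFinset_univ]
        rw [Finset.sum_comm]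

theorem sum_injective_eq {M : Type*} [AddCommMonoid M] (g : (Fin k → Fin n) → M) :
    ∑ f ∈ univ.filter Function.Injective, g f =
      ∑ x : ExtIdx n k × Perm (Fin k), g (fun i => x.1.1.orderEmbOfFin x.1.2 (x.2 i)) := by
  refine (Finset.sum_bij (fun x _ => fun i => x.1.1.orderEmbOfFin x.1.2 (x.2 i)) ?_ ?_ ?_ ?_).symm
  · intro x _
    simp only [mem_filter, mem_univ, true_and]
    exact (x.1.1.orderEmbOfFin x.1.2).injective.comp x.2.injective
  · rintro ⟨K, τ⟩ _ ⟨K', τ'⟩ _ h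
    have hK : K = K' := by
      apply Subtype.ext
      apply Finset.ext
      intro a
      constructor
      · intro ha
        obtain ⟨i, hi⟩ := (Finset.range_orderEmbOfFin K.1 K.2 ▸ Finset.mem_coe.2 ha :
          a ∈ Set.range (K.1.orderEmbOfFin K.2))
        have := congrFun h (τ.symm i)
        simp only [Equiv.apply_symm_apply] at this
        rw [← hi, this]
        exact Finset.orderEmbOfFin_mem _ _ _
      · intro ha
        obtain ⟨i, hi⟩ := (Finset.range_orderEmbOfFin K'.1 K'.2 ▸ Finset.mem_coe.2 ha :
          a ∈ Set.range (K'.1.orderEmbOfFin K'.2))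
        have := congrFun h (τ'.symm i)
        simp only [Equiv.apply_symm_apply] at this
        rw [← hi, ← this]
        exact Finset.orderEmbOfFin_mem _ _ _
    subst hK
    have hτ : τ = τ' := Equiv.ext fun i => (K.1.orderEmbOfFin K.2).injective (congrFun h i)
    rw [hτ]
  · intro f hf
    have hf' : Function.Injective f := (mem_filter.1 hf).2
    have hcard : (Finset.image f univ).card = k := by
      rw [Finset.card_image_of_injective _ hf', card_univ, Fintype.card_fin]
    have hmem : ∀ i, f i ∈ Finset.image f univ := fun i => Finset.mem_image_of_mem f (mem_univ i)
    set g' : Fin k → Fin k :=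
      fun i => ((Finset.image f univ).orderIsoOfFin hcard).symm ⟨f i, hmem i⟩ with hg'
    have hkey : ∀ i, (Finset.image f univ).orderEmbOfFin hcard (g' i) = f i := by
      intro i
      rw [← Finset.coe_orderIsoOfFin_apply, hg']
      simp only [OrderIso.apply_symm_apply]
    have hg'inj : Function.Injective g' := by
      intro a b hab
      apply hf'
      rw [← hkey a, ← hkey b, hab]
    refine ⟨⟨⟨Finset.image f univ, hcard⟩,
      Equiv.ofBijective g' (Finite.injective_iff_bijective.1 hg'inj)⟩, mem_univ _, ?_⟩
    funext i
    exact hkey i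
  · intros; rfl

theorem cauchyBinet {n : ℕ} (A : Matrix (Fin k) (Fin n) R) (B : Matrix (Fin n) (Fin k) R) :
    (A * B).det = ∑ K : ExtIdx n k,
      (A.submatrix id (K.1.orderEmbOfFin K.2)).det *
      (B.submatrix (K.1.orderEmbOfFin K.2) id).det := by
  calc (A * B).det
      = ∑ f : Fin k → Fin n, ∑ σ : Perm (Fin k), ε σ * ∏ i, A (σ i) (f i) * B (f i) i := by
        simp only [det_apply', Matrix.mul_apply, prod_univ_sum, mul_sum, Fintype.piFinset_univ]
        rw [Finset.sum_comm]
    _ = ∑ f ∈ univ.filter Function.Injective,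
          ∑ σ : Perm (Fin k), ε σ * ∏ i, A (σ i) (f i) * B (f i) i := by
        refine (sum_subset (filter_subset _ _) fun f _ hinj ↦ cb_aux A B ?_).symm
        simpa only [true_and, mem_filter, mem_univ] using hinj
    _ = ∑ x : ExtIdx n k × Perm (Fin k),
          ∑ σ : Perm (Fin k), ε σ * ∏ i,
            A (σ i) (x.1.1.orderEmbOfFin x.1.2 (x.2 i)) * B (x.1.1.orderEmbOfFin x.1.2 (x.2 i)) i :=
        sum_injective_eq _
    _ = ∑ K : ExtIdx n k, ∑ τ : Perm (Fin k), ∑ σ : Perm (Fin k), ε σ * ∏ i,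
          (A.submatrix id (K.1.orderEmbOfFin K.2)) (σ i) (τ i) *
          (B.submatrix (K.1.orderEmbOfFin K.2) id) (τ i) i := by
        rw [Fintype.sum_prod_type]
        rfl
    _ = ∑ K : ExtIdx n k,
          (A.submatrix id (K.1.orderEmbOfFin K.2)).det *
          (B.submatrix (K.1.orderEmbOfFin K.2) id).det := by
        exact Finset.sum_congr rfl fun K _ => sum_perm_perm _ _

variable {R : Type} [CommRing R] {n m : ℕ}

theorem extPow_apply (g : Matrix (Fin n) (Fin n) R) (I J : ExtIdx n m) :
    extPow R n m g I J = (g.submatrix (I.1.orderEmbOfFin I.2) (J.1.orderEmbOfFin J.2)).det := by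
  show (Matrix.of fun a b : Fin m =>
      g (I.1.orderIsoOfFin I.2 a) (J.1.orderIsoOfFin J.2 b)).det = _
  rfl

theorem extPow_mul (A B : Matrix (Fin n) (Fin n) R) :
    extPow R n m (A * B) = extPow R n m A * extPow R n m B := by
  ext I J
  rw [extPow_apply, Matrix.mul_apply]
  have : (A * B).submatrix (I.1.orderEmbOfFin I.2) (J.1.orderEmbOfFin J.2) =
      (A.submatrix (I.1.orderEmbOfFin I.2) id) * (B.submatrix id (J.1.orderEmbOfFin J.2)) := by
    ext a b
    simp [Matrix.mul_apply]
  rw [this, cauchyBinet]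
  refine Finset.sum_congr rfl fun K _ => ?_
  rw [extPow_apply, extPow_apply]
  rfl

theorem extPow_map {S : Type} [CommRing S] (f : R →+* S) (g : Matrix (Fin n) (Fin n) R) :
    extPow S n m (g.map f) = (extPow R n m g).map f := by
  ext I J
  rw [Matrix.map_apply, extPow_apply, extPow_apply, RingHom.map_det]
  congr 1

theorem extPow_diagonal (d : Fin n → R) :
    extPow R n m (Matrix.diagonal d) = Matrix.diagonal (fun I : ExtIdx n m => ∏ i ∈ I.1, d i) := by
  ext I J
  rw [extPow_apply]
  rcases eq_or_ne I J with rfl | hIJ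
  · have : (Matrix.diagonal d).submatrix (I.1.orderEmbOfFin I.2) (I.1.orderEmbOfFin I.2) =
        Matrix.diagonal (fun a => d (I.1.orderEmbOfFin I.2 a)) := by
      ext a b
      rcases eq_or_ne a b with rfl | hab
      · simp
      · simp [Matrix.diagonal_apply_ne, hab,
          fun h => hab ((I.1.orderEmbOfFin I.2).injective h)]
    rw [this, Matrix.det_diagonal, Matrix.diagonal_apply_eq]
    rw [← Finset.prod_coe_sort I.1 d]
    exact Fintype.prod_equiv (I.1.orderIsoOfFin I.2).toEquiv _ _ (fun a => rfl)
  · rw [Matrix.diagonal_apply_ne _ hIJ]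
    -- find a row index a with I_a ∉ J
    have hex : ∃ i, i ∈ I.1 ∧ i ∉ J.1 := by
      by_contra hc
      push_neg at hc
      exact hIJ (Subtype.ext (Finset.eq_of_subset_of_card_le hc (by rw [I.2, J.2])))
    obtain ⟨i, hiI, hiJ⟩ := hex
    obtain ⟨a, ha⟩ := (Finset.range_orderEmbOfFin I.1 I.2 ▸ Finset.mem_coe.2 hiI :
      i ∈ Set.range (I.1.orderEmbOfFin I.2))
    apply Matrix.det_eq_zero_of_row_eq_zero a
    intro b
    have : I.1.orderEmbOfFin I.2 a ≠ J.1.orderEmbOfFin J.2 b := by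
      intro h
      exact hiJ (ha ▸ h ▸ Finset.orderEmbOfFin_mem J.1 J.2 b)
    simp [Matrix.diagonal_apply_ne _ this]

theorem extPow_one : extPow R n m (1 : Matrix (Fin n) (Fin n) R) = 1 := by
  rw [← Matrix.diagonal_one, extPow_diagonal]
  simp

theorem count_mem (hm1 : 1 ≤ m) (i : Fin n) :
    (Finset.univ.filter (fun I : ExtIdx n m => i ∈ I.1)).card = (n - 1).choose (m - 1) := by
  have h := Finset.card_powersetCard (m - 1) ((Finset.univ : Finset (Fin n)).erase i)
  rw [Finset.card_erase_of_mem (mem_univ i), card_univ, Fintype.card_fin] at h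
  rw [← h]
  refine Finset.card_bij' (fun I _ => I.1.erase i)
    (fun s hs => ⟨insert i s, by
      obtain ⟨hsub, hcard⟩ := Finset.mem_powersetCard.1 hs
      have hns : i ∉ s := fun hi => (Finset.mem_erase.1 (hsub hi)).1 rfl
      rw [Finset.card_insert_of_notMem hns, hcard]
      omega⟩)
    ?_ ?_ ?_ ?_
  · intro I hI
    obtain ⟨-, hiI⟩ := Finset.mem_filter.1 hI
    rw [Finset.mem_powersetCard]
    constructor
    · intro x hx
      exact Finset.mem_erase.2 ⟨(Finset.mem_erase.1 hx).1, Finset.mem_univ x⟩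
    · rw [Finset.card_erase_of_mem hiI, I.2]
  · intro s hs
    simp [Finset.mem_filter]
  · intro I hI
    obtain ⟨-, hiI⟩ := Finset.mem_filter.1 hI
    exact Subtype.ext (Finset.insert_erase hiI)
  · intro s hs
    obtain ⟨hsub, -⟩ := Finset.mem_powersetCard.1 hs
    have hns : i ∉ s := fun hi => (Finset.mem_erase.1 (hsub hi)).1 rfl
    simp [Finset.erase_insert hns]

theorem det_extPow_diagonal (hm1 : 1 ≤ m) (d : Fin n → R) :
    (extPow R n m (Matrix.diagonal d)).det = (∏ i, d i) ^ (n - 1).choose (m - 1) := by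
  rw [extPow_diagonal, Matrix.det_diagonal]
  calc ∏ I : ExtIdx n m, ∏ i ∈ I.1, d i
      = ∏ I : ExtIdx n m, ∏ i : Fin n, (if i ∈ I.1 then d i else 1) := by
        refine Finset.prod_congr rfl fun I _ => ?_
        exact (Fintype.prod_ite_mem _ _).symm
    _ = ∏ i : Fin n, ∏ I : ExtIdx n m, (if i ∈ I.1 then d i else 1) := Finset.prod_comm
    _ = ∏ i : Fin n, d i ^ (n - 1).choose (m - 1) := by
        refine Finset.prod_congr rfl fun i _ => ?_
        rw [← Finset.prod_filter, Finset.prod_const, count_mem hm1]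
    _ = (∏ i, d i) ^ (n - 1).choose (m - 1) := by rw [Finset.prod_pow]

theorem map_transvection {S : Type} [CommRing S] (f : R →+* S) (i j : Fin n) (c : R) :
    (Matrix.transvection i j c).map f = Matrix.transvection i j (f c) := by
  ext a b
  simp [Matrix.transvection, Matrix.map_apply, Matrix.one_apply, Matrix.single, Matrix.single_apply,
    apply_ite f]

theorem det_extPow_transvection (i j : Fin n) (hij : i ≠ j) (c : R) :
    (extPow R n m (Matrix.transvection i j c)).det = 1 := by
  have key : (extPow (Polynomial ℤ) n m (Matrix.transvection i j (Polynomial.X))).det = 1 := by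
    set p := (extPow (Polynomial ℤ) n m (Matrix.transvection i j (Polynomial.X))).det with hp
    have hpq : p * (extPow (Polynomial ℤ) n m
        (Matrix.transvection i j (-Polynomial.X))).det = 1 := by
      rw [hp, ← Matrix.det_mul, ← extPow_mul,
        Matrix.transvection_mul_transvection_same _ _ hij, add_neg_cancel,
        Matrix.transvection_zero, extPow_one, Matrix.det_one]
    have hu : IsUnit p := IsUnit.of_mul_eq_one _ hpq
    obtain ⟨r, hr, hrp⟩ := Polynomial.isUnit_iff.1 hu
    have he : p.eval 0 = 1 := by
      have h1 : (Polynomial.evalRingHom (0 : ℤ)) p =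
          ((extPow (Polynomial ℤ) n m (Matrix.transvection i j Polynomial.X)).map
            (Polynomial.evalRingHom (0 : ℤ))).det := by
        rw [hp, RingHom.map_det, RingHom.mapMatrix_apply]
      rw [show (Polynomial.eval 0 p) = (Polynomial.evalRingHom (0 : ℤ)) p from rfl, h1,
        ← extPow_map, map_transvection]
      simp [Matrix.transvection_zero, extPow_one]
    rw [← hrp] at he ⊢
    rw [Polynomial.eval_C] at he
    rw [he, Polynomial.C_1]
  have hφ := congrArg (Polynomial.eval₂RingHom (Int.castRingHom R) c) key
  rw [_root_.map_one, RingHom.map_det, RingHom.mapMatrix_apply, ← extPow_map, map_transvection] at hφ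
  simpa using hφ

theorem det_extPow_field {K : Type} [Field K] (hm1 : 1 ≤ m) (M : Matrix (Fin n) (Fin n) K) :
    (extPow K n m M).det = M.det ^ (n - 1).choose (m - 1) := by
  apply Matrix.diagonal_transvection_induction
    (fun A => (extPow K n m A).det = A.det ^ (n - 1).choose (m - 1)) M
  · intro D _
    rw [det_extPow_diagonal hm1, Matrix.det_diagonal]
  · intro t
    cases t with
    | mk ti tj thij tc =>
      rw [Matrix.TransvectionStruct.toMatrix_mk,
        det_extPow_transvection ti tj thij, Matrix.det_transvection_of_ne _ _ thij, one_pow]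
  · intro A B hA hB
    rw [extPow_mul, Matrix.det_mul, hA, hB, Matrix.det_mul, mul_pow]

theorem det_extPow_matrix (hm1 : 1 ≤ m) (M : Matrix (Fin n) (Fin n) R) :
    (extPow R n m M).det = M.det ^ (n - 1).choose (m - 1) := by
  classical
  set S := MvPolynomial (Fin n × Fin n) ℤ with hS
  set X : Matrix (Fin n) (Fin n) S := Matrix.of fun i j => MvPolynomial.X (i, j) with hX
  have key : (extPow S n m X).det = X.det ^ (n - 1).choose (m - 1) := by
    set K := FractionRing S with hK
    have hinj : Function.Injective (algebraMap S K) := IsFractionRing.injective S K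
    apply hinj
    rw [map_pow, RingHom.map_det, RingHom.map_det, RingHom.mapMatrix_apply,
      RingHom.mapMatrix_apply, ← extPow_map, det_extPow_field hm1]
  set φ : S →+* R := MvPolynomial.eval₂Hom (Int.castRingHom R) (fun p => M p.1 p.2) with hφ
  have hXM : X.map φ = M := by
    ext a b
    rw [Matrix.map_apply]
    exact MvPolynomial.eval₂Hom_X' _ _ _
  have h := congrArg φ key
  rw [map_pow, RingHom.map_det, RingHom.map_det, RingHom.mapMatrix_apply,
    RingHom.mapMatrix_apply, ← extPow_map, hXM] at h
  exact h

end AuxDetExtPow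

/-- For any `g ∈ GL_n(R)`, `det (Λ^m g) = (det g) ^ (n-1).choose (m-1)`. -/
theorem det_extPow (R : Type) [CommRing R] (n m : ℕ)
    (hn : 1 ≤ n) (hm1 : 1 ≤ m) (hmn : m ≤ n) (g : GL (Fin n) R) :
    (extPow R n m (g : Matrix (Fin n) (Fin n) R)).det =
      ((g : Matrix (Fin n) (Fin n) R).det) ^ ((n - 1).choose (m - 1)) :=
  det_extPow_matrix hm1 _
end

section
/- Let I, J ∈ Λ^m[n] be distinct, and let i, j ∈ [n] with i ∉ I and j ∉ J, i ≠ j. Then the exterior transvection Λ^m t_{j,i}(ζ) commutes with t_{I,J}(ξ): [t_{I,J}(ξ), Λ^m t_{j,i}(ζ)] = e. -/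
open Matrix
open scoped commutatorElement

lemma extPow_mem_iff {n m : ℕ} (K : ExtIdx n m) (x : Fin n) (hx : x ∈ K.1) (a : Fin m) :
    (x = ((K.1.orderIsoOfFin K.2) a : Fin n)) ↔ (K.1.orderIsoOfFin K.2).symm ⟨x, hx⟩ = a := by
  set f := K.1.orderIsoOfFin K.2
  constructor
  · intro h
    rw [show (⟨x, hx⟩ : {y // y ∈ K.1}) = f a from Subtype.ext h, f.symm_apply_apply]
  · intro h
    rw [← h, f.apply_symm_apply]

lemma extPow_transvection_diag (R : Type) [CommRing R] (n m : ℕ) (j i : Fin n)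
    (hij : j ≠ i) (ζ : R) (K : ExtIdx n m) :
    extPow R n m (Matrix.transvection j i ζ) K K = 1 := by
  set f := K.1.orderIsoOfFin K.2 with hf
  have hab : ∀ a b : Fin m, ((f a : Fin n) = f b) ↔ a = b := by
    intro a b
    constructor
    · intro h; exact f.injective (Subtype.ext h)
    · intro h; rw [h]
  by_cases hj : j ∈ K.1
  · by_cases hi : i ∈ K.1
    · have key : (Matrix.of fun a b : Fin m =>
          (Matrix.transvection j i ζ) (f a) (f b)) =
          Matrix.transvection (f.symm ⟨j, hj⟩) (f.symm ⟨i, hi⟩) ζ := by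
        ext a b
        simp only [Matrix.of_apply, Matrix.transvection, Matrix.add_apply, Matrix.one_apply,
          Matrix.single, Matrix.of_apply, hab a b,
          extPow_mem_iff K j hj a, extPow_mem_iff K i hi b]
        rw [if_congr (and_congr (extPow_mem_iff K j hj a) (extPow_mem_iff K i hi b)) rfl rfl]
      rw [extPow, Matrix.of_apply, ← hf, key]
      apply Matrix.det_transvection_of_ne
      intro h
      apply hij
      have := congrArg f h
      rw [f.apply_symm_apply, f.apply_symm_apply] at this
      exact congrArg Subtype.val this
    · have key : (Matrix.of fun a b : Fin m =>
          (Matrix.transvection j i ζ) (f a) (f b)) = 1 := by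
        ext a b
        have hbi : ¬ (i = (f b : Fin n)) := fun h => hi (by rw [h]; exact (f b).2)
        simp [Matrix.transvection, Matrix.one_apply, Matrix.single, hab a b, hbi]
      rw [extPow, Matrix.of_apply, ← hf, key, Matrix.det_one]
  · have key : (Matrix.of fun a b : Fin m =>
        (Matrix.transvection j i ζ) (f a) (f b)) = 1 := by
      ext a b
      have haj : ¬ (j = (f a : Fin n)) := fun h => hj (by rw [h]; exact (f a).2)
      simp [Matrix.transvection, Matrix.one_apply, Matrix.single, hab a b, haj]
    rw [extPow, Matrix.of_apply, ← hf, key, Matrix.det_one]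

lemma extPow_transvection_offdiag (R : Type) [CommRing R] (n m : ℕ) (j i : Fin n)
    (ζ : R) (K L : ExtIdx n m) (hKL : K ≠ L) (h : j ∉ K.1 ∨ i ∉ L.1) :
    extPow R n m (Matrix.transvection j i ζ) K L = 0 := by
  set f := K.1.orderIsoOfFin K.2 with hf
  set g := L.1.orderIsoOfFin L.2 with hg
  have hsub : ¬ (L.1 ⊆ K.1) := by
    intro hs
    exact hKL (Subtype.ext (Finset.eq_of_subset_of_card_le hs (by rw [K.2, L.2])).symm)
  obtain ⟨x, hxL, hxK⟩ := Finset.not_subset.mp hsub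
  rw [extPow, Matrix.of_apply]
  apply Matrix.det_eq_zero_of_column_eq_zero (g.symm ⟨x, hxL⟩)
  intro a
  have hgx : (g (g.symm ⟨x, hxL⟩) : Fin n) = x := by rw [g.apply_symm_apply]
  have hfa : ¬ ((f a : Fin n) = x) := fun h' => hxK (h' ▸ (f a).2)
  rcases h with hjK | hiL
  · have haj : ¬ (j = (f a : Fin n)) := fun h' => hjK (by rw [h']; exact (f a).2)
    simp [Matrix.transvection, Matrix.one_apply, Matrix.single, ← hf, ← hg,
      hgx, hfa, haj]
  · have hxi : ¬ (i = x) := fun h' => hiL (h' ▸ hxL)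
    simp [Matrix.transvection, Matrix.one_apply, Matrix.single, ← hf, ← hg,
      hgx, hfa, hxi]

/-- First-type commutation: if `i ∉ I` and `j ∉ J` (with `i ≠ j`), then the exterior
transvection `Λ^m t_{j,i}(ζ)` commutes with `t_{I,J}(ξ)`. -/
theorem commutator_type_one (R : Type) [CommRing R] (n m : ℕ)
    (hn : 3 ≤ n) (hm1 : 1 ≤ m) (hmn : m < n)
    (I J : ExtIdx n m) (hIJ : I ≠ J) (i j : Fin n) (hij : i ≠ j)
    (hiI : i ∉ I.1) (hjJ : j ∉ J.1) (ξ ζ : R) (u : GL (ExtIdx n m) R)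
    (hu : (u : Matrix (ExtIdx n m) (ExtIdx n m) R) =
      extPow R n m (Matrix.transvection j i ζ)) :
    ⁅tGL R I J hIJ ξ, u⁆ = 1 := by
  rw [commutatorElement_eq_one_iff_mul_comm]
  ext1
  rw [Units.val_mul, Units.val_mul, hu]
  show Matrix.transvection I J ξ * _ = _ * Matrix.transvection I J ξ
  set M := extPow R n m (Matrix.transvection j i ζ) with hM
  rw [Matrix.transvection, add_mul, mul_add, one_mul, mul_one]
  congr 1
  ext K L
  by_cases hK : K = I
  · subst hK
    rw [Matrix.single_mul_apply_same]
    by_cases hL : L = J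
    · subst hL
      rw [Matrix.mul_single_apply_same, hM,
        extPow_transvection_diag R n m j i (Ne.symm hij) ζ,
        extPow_transvection_diag R n m j i (Ne.symm hij) ζ, mul_one, one_mul]
    · rw [Matrix.mul_single_apply_of_ne _ _ _ _ _ hL, hM,
        extPow_transvection_offdiag R n m j i ζ J L (fun h => hL h.symm) (Or.inl hjJ),
        mul_zero]
  · rw [Matrix.single_mul_apply_of_ne _ _ _ _ _ hK]
    by_cases hL : L = J
    · subst hL
      rw [Matrix.mul_single_apply_same, hM,
        extPow_transvection_offdiag R n m j i ζ K I hK (Or.inr hiI), zero_mul]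
    · rw [Matrix.mul_single_apply_of_ne _ _ _ _ _ hL]
end

section
/- Let H be a subgroup of GL_N(R) containing Λ^m E_n(R), and for distinct I, J ∈ Λ^m[n] set A_{I,J} = {ξ ∈ R : t_{I,J}(ξ) ∈ H}. Then each A_{I,J} is an ideal of R. -/
open Matrix

namespace LevelAux

open Finset

variable {R : Type} [CommRing R] {n m : ℕ}

/-- The equivalence between `insert a (L.erase b)` and `L` sending `a ↦ b`. -/
def swapEquiv (a b : Fin n) (hab : a ≠ b) (L : Finset (Fin n)) (hb : b ∈ L) (ha : a ∉ L) :
    {x // x ∈ insert a (L.erase b)} ≃ {x // x ∈ L} where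
  toFun x := ⟨if x.1 = a then b else x.1, by
    rcases x with ⟨x, hx⟩
    by_cases h : x = a
    · simpa [h] using hb
    · simp only [h, if_false]
      rcases Finset.mem_insert.mp hx with h' | h'
      · exact absurd h' h
      · exact Finset.mem_of_mem_erase h'⟩
  invFun y := ⟨if y.1 = b then a else y.1, by
    rcases y with ⟨y, hy⟩
    by_cases h : y = b
    · simp [h]
    · simp only [h, if_false]
      exact Finset.mem_insert_of_mem (Finset.mem_erase.mpr ⟨h, hy⟩)⟩
  left_inv := by
    rintro ⟨x, hx⟩
    by_cases h : x = a
    · simp [h, hab.symm]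
    · have hxb : x ≠ b := by
        intro hxb
        rcases Finset.mem_insert.mp hx with h' | h'
        · exact h h'
        · exact (Finset.notMem_erase b L) (hxb ▸ h')
      simp [h, hxb]
  right_inv := by
    rintro ⟨y, hy⟩
    by_cases h : y = b
    · simp [h]
    · have hya : y ≠ a := fun hy' => ha (hy' ▸ hy)
      simp [h, hya]

/-- The permutation of `Fin m` induced by replacing `b ∈ L` with `a ∉ L`. -/
noncomputable def swapPerm (a b : Fin n) (hab : a ≠ b) (L : ExtIdx n m)
    (hb : b ∈ L.1) (ha : a ∉ L.1) : Equiv.Perm (Fin m) :=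
  ((((swapIdx L b a hb ha).1.orderIsoOfFin (swapIdx L b a hb ha).2).toEquiv.trans
      (swapEquiv a b hab L.1 hb ha)).trans
    (L.1.orderIsoOfFin L.2).toEquiv.symm)

lemma orderIsoOfFin_swapPerm (a b : Fin n) (hab : a ≠ b) (L : ExtIdx n m)
    (hb : b ∈ L.1) (ha : a ∉ L.1) (r : Fin m) :
    (L.1.orderIsoOfFin L.2 (swapPerm a b hab L hb ha r) : Fin n) =
      if ((swapIdx L b a hb ha).1.orderIsoOfFin (swapIdx L b a hb ha).2 r : Fin n) = a then b
      else ((swapIdx L b a hb ha).1.orderIsoOfFin (swapIdx L b a hb ha).2 r : Fin n) := by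
  simp [swapPerm, swapEquiv]
  rfl

/-- The sign `ε(L)` appearing in the matrix of `Λ^m t_{a,b}(λ)`. -/
noncomputable def eps (R : Type) [CommRing R] {n m : ℕ} (a b : Fin n) (hab : a ≠ b)
    (L : ExtIdx n m) : R :=
  if h : b ∈ L.1 ∧ a ∉ L.1 then
    ((Equiv.Perm.sign (swapPerm a b hab L h.1 h.2) : ℤ) : R)
  else 1

lemma eps_mul_self (a b : Fin n) (hab : a ≠ b) (L : ExtIdx n m) :
    eps R a b hab L * eps R a b hab L = 1 := by
  unfold eps
  split
  · next h =>
    set s := Equiv.Perm.sign (swapPerm a b hab L h.1 h.2) with hs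
    have h1 : ((s : ℤ) : R) * ((s : ℤ) : R) = (((s * s : ℤˣ) : ℤ) : R) := by push_cast; ring
    rw [h1, Int.units_mul_self, Units.val_one, Int.cast_one]
  · rw [mul_one]

lemma transvection_entry (a b : Fin n) (lam : R) (x y : Fin n) :
    Matrix.transvection a b lam x y =
      (if x = y then (1 : R) else 0) + (if a = x ∧ b = y then lam else 0) := by
  rw [Matrix.transvection, Matrix.add_apply, Matrix.one_apply]
  rfl

/-- The entries of the exterior power of a transvection. -/
lemma extPow_transvection_apply (a b : Fin n) (hab : a ≠ b) (lam : R) (X L : ExtIdx n m) :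
    extPow R n m (Matrix.transvection a b lam) X L =
      if X = L then 1
      else if b ∈ L.1 ∧ a ∉ L.1 ∧ X.1 = insert a (L.1.erase b) then eps R a b hab L * lam
      else 0 := by
  have hLinj : Function.Injective (fun s : Fin m => ((L.1.orderIsoOfFin L.2 s : Fin n))) :=
    fun r s h => (L.1.orderIsoOfFin L.2).injective (Subtype.ext h)
  rcases eq_or_ne X L with hXL | hXL
  · subst hXL
    rw [if_pos rfl]
    show (Matrix.of fun r s : Fin m => Matrix.transvection a b lam
      (X.1.orderIsoOfFin X.2 r) (X.1.orderIsoOfFin X.2 s)).det = 1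
    have hXinj : Function.Injective (fun s : Fin m => ((X.1.orderIsoOfFin X.2 s : Fin n))) :=
      fun r s h => (X.1.orderIsoOfFin X.2).injective (Subtype.ext h)
    by_cases haX : a ∈ X.1
    · by_cases hbX : b ∈ X.1
      · set r0 := (X.1.orderIsoOfFin X.2).symm ⟨a, haX⟩ with hr0def
        set s0 := (X.1.orderIsoOfFin X.2).symm ⟨b, hbX⟩ with hs0def
        have hr0 : (X.1.orderIsoOfFin X.2 r0 : Fin n) = a := by
          rw [hr0def, OrderIso.apply_symm_apply]
        have hs0 : (X.1.orderIsoOfFin X.2 s0 : Fin n) = b := by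
          rw [hs0def, OrderIso.apply_symm_apply]
        have hM : (Matrix.of fun r s : Fin m => Matrix.transvection a b lam
            (X.1.orderIsoOfFin X.2 r) (X.1.orderIsoOfFin X.2 s))
            = Matrix.transvection r0 s0 lam := by
          ext r s
          rw [Matrix.of_apply, transvection_entry, Matrix.transvection, Matrix.add_apply,
            Matrix.one_apply]
          congr 1
          · by_cases h : r = s
            · simp [h]
            · rw [if_neg h, if_neg (fun hc => h (hXinj hc))]
          · show _ = Matrix.single r0 s0 lam r s
            rw [Matrix.single]
            show _ = if r0 = r ∧ s0 = s then lam else 0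
            congr 1
            have e1 : (a = (X.1.orderIsoOfFin X.2 r : Fin n)) = (r0 = r) := by
              apply propext; constructor <;> intro h
              · exact (X.1.orderIsoOfFin X.2).injective (Subtype.ext (hr0.trans h))
              · rw [← h, hr0]
            have e2 : (b = (X.1.orderIsoOfFin X.2 s : Fin n)) = (s0 = s) := by
              apply propext; constructor <;> intro h
              · exact (X.1.orderIsoOfFin X.2).injective (Subtype.ext (hs0.trans h))
              · rw [← h, hs0]
            rw [e1, e2]
        have hr0s0 : r0 ≠ s0 := by
          intro h
          exact hab (hr0.symm.trans (h ▸ hs0))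
        rw [hM, Matrix.det_transvection_of_ne r0 s0 hr0s0]
      · have hM : (Matrix.of fun r s : Fin m => Matrix.transvection a b lam
            (X.1.orderIsoOfFin X.2 r) (X.1.orderIsoOfFin X.2 s)) = (1 : Matrix (Fin m) (Fin m) R) := by
          ext r s
          rw [Matrix.of_apply, transvection_entry, Matrix.one_apply]
          have : ¬(a = (X.1.orderIsoOfFin X.2 r : Fin n) ∧ b = (X.1.orderIsoOfFin X.2 s : Fin n)) := by
            rintro ⟨-, h2⟩
            exact hbX (h2 ▸ (X.1.orderIsoOfFin X.2 s).2)
          rw [if_neg this, add_zero]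
          by_cases h : r = s
          · simp [h]
          · rw [if_neg h, if_neg (fun hc => h (hXinj hc))]
        rw [hM, Matrix.det_one]
    · have hM : (Matrix.of fun r s : Fin m => Matrix.transvection a b lam
          (X.1.orderIsoOfFin X.2 r) (X.1.orderIsoOfFin X.2 s)) = (1 : Matrix (Fin m) (Fin m) R) := by
        ext r s
        rw [Matrix.of_apply, transvection_entry, Matrix.one_apply]
        have : ¬(a = (X.1.orderIsoOfFin X.2 r : Fin n) ∧ b = (X.1.orderIsoOfFin X.2 s : Fin n)) := by
          rintro ⟨h1, -⟩
          exact haX (h1 ▸ (X.1.orderIsoOfFin X.2 r).2)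
        rw [if_neg this, add_zero]
        by_cases h : r = s
        · simp [h]
        · rw [if_neg h, if_neg (fun hc => h (hXinj hc))]
      rw [hM, Matrix.det_one]
  · rw [if_neg hXL]
    by_cases hcond : b ∈ L.1 ∧ a ∉ L.1 ∧ X.1 = insert a (L.1.erase b)
    · rw [if_pos hcond]
      obtain ⟨hb, ha, hX⟩ := hcond
      have hXeq : X = swapIdx L b a hb ha := Subtype.ext hX
      subst hXeq
      show (Matrix.of fun r s : Fin m => Matrix.transvection a b lam
        ((swapIdx L b a hb ha).1.orderIsoOfFin (swapIdx L b a hb ha).2 r)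
        (L.1.orderIsoOfFin L.2 s)).det = eps R a b hab L * lam
      set σ := swapPerm a b hab L hb ha with hσ
      set d : Fin m → R := fun s => if (L.1.orderIsoOfFin L.2 s : Fin n) = b then lam else 1
        with hd
      have hM : (Matrix.of fun r s : Fin m => Matrix.transvection a b lam
          ((swapIdx L b a hb ha).1.orderIsoOfFin (swapIdx L b a hb ha).2 r)
          (L.1.orderIsoOfFin L.2 s)) = (Matrix.diagonal d).submatrix σ id := by
        ext r s
        rw [Matrix.of_apply, transvection_entry, Matrix.submatrix_apply, id]
        have hkey := orderIsoOfFin_swapPerm a b hab L hb ha r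
        rw [← hσ] at hkey
        by_cases hrs : σ r = s
        · subst hrs
          rw [Matrix.diagonal_apply_eq]
          by_cases hxa : ((swapIdx L b a hb ha).1.orderIsoOfFin (swapIdx L b a hb ha).2 r : Fin n) = a
          · rw [if_pos hxa] at hkey
            simp only [hd, hkey, and_true, if_true]
            rw [if_neg (fun hc => hab (by rw [← hxa]; exact hc)), zero_add, if_pos hxa.symm]
          · rw [if_neg hxa] at hkey
            have hne_b : ((swapIdx L b a hb ha).1.orderIsoOfFin (swapIdx L b a hb ha).2 r : Fin n) ≠ b := by
              intro hc
              have hmem := ((swapIdx L b a hb ha).1.orderIsoOfFin (swapIdx L b a hb ha).2 r).2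
              rw [hc] at hmem
              rcases Finset.mem_insert.mp hmem with h' | h'
              · exact hab h'.symm
              · exact Finset.notMem_erase b L.1 h'
            simp only [hd, hkey, if_true]
            rw [if_neg (fun hc => hxa hc.1.symm), add_zero, if_neg hne_b]
        · rw [Matrix.diagonal_apply_ne d hrs]
          have h1 : ¬(((swapIdx L b a hb ha).1.orderIsoOfFin (swapIdx L b a hb ha).2 r : Fin n)
              = (L.1.orderIsoOfFin L.2 s : Fin n)) := by
            intro hc
            by_cases hxa : ((swapIdx L b a hb ha).1.orderIsoOfFin (swapIdx L b a hb ha).2 r : Fin n) = a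
            · exact ha (hxa ▸ hc ▸ (L.1.orderIsoOfFin L.2 s).2)
            · rw [if_neg hxa] at hkey
              exact hrs (hLinj (hkey.trans hc))
          have h2 : ¬((a = ((swapIdx L b a hb ha).1.orderIsoOfFin (swapIdx L b a hb ha).2 r : Fin n))
              ∧ (b = (L.1.orderIsoOfFin L.2 s : Fin n))) := by
            rintro ⟨ha', hb'⟩
            rw [if_pos ha'.symm] at hkey
            exact hrs (hLinj (hkey.trans hb'))
          rw [if_neg h1, if_neg h2, add_zero]
      rw [hM, Matrix.det_permute, Matrix.det_diagonal]
      have hprod : ∏ s, d s = lam := by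
        set s0 := (L.1.orderIsoOfFin L.2).symm ⟨b, hb⟩ with hs0def
        have hs0 : (L.1.orderIsoOfFin L.2 s0 : Fin n) = b := by
          rw [hs0def, OrderIso.apply_symm_apply]
        rw [Finset.prod_eq_single s0]
        · simp only [hd]
          rw [if_pos hs0]
        · intro s _ hne
          simp only [hd]
          rw [if_neg (fun hc => hne ((L.1.orderIsoOfFin L.2).injective (Subtype.ext (hc.trans hs0.symm))))]
        · intro h
          exact absurd (Finset.mem_univ s0) h
      rw [hprod, eps, dif_pos ⟨hb, ha⟩]
    · rw [if_neg hcond]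
      by_cases hc : ∃ x ∈ L.1, x ∉ X.1 ∧ x ≠ b
      · obtain ⟨x, hxL, hxX, hxb⟩ := hc
        set s1 := (L.1.orderIsoOfFin L.2).symm ⟨x, hxL⟩ with hs1def
        have hs1 : (L.1.orderIsoOfFin L.2 s1 : Fin n) = x := by
          rw [hs1def, OrderIso.apply_symm_apply]
        apply Matrix.det_eq_zero_of_column_eq_zero s1
        intro r
        rw [Matrix.of_apply, transvection_entry, hs1]
        rw [if_neg (fun hc' => hxX (by rw [← hc']; exact (X.1.orderIsoOfFin X.2 r).2)),
          if_neg (fun hc' => hxb hc'.2.symm), add_zero]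
      · by_cases hr : ∃ y ∈ X.1, y ∉ L.1 ∧ y ≠ a
        · obtain ⟨y, hyX, hyL, hya⟩ := hr
          set r1 := (X.1.orderIsoOfFin X.2).symm ⟨y, hyX⟩ with hr1def
          have hr1 : (X.1.orderIsoOfFin X.2 r1 : Fin n) = y := by
            rw [hr1def, OrderIso.apply_symm_apply]
          apply Matrix.det_eq_zero_of_row_eq_zero r1
          intro s
          rw [Matrix.of_apply, transvection_entry, hr1]
          rw [if_neg (fun hc' => hyL (by rw [hc']; exact (L.1.orderIsoOfFin L.2 s).2)),
            if_neg (fun hc' => hya hc'.1.symm), add_zero]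
        · exfalso
          push_neg at hc hr
          -- L \ X ⊆ {b}, X \ L ⊆ {a}
          have hLX : L.1 \ X.1 ⊆ {b} := by
            intro x hx
            rw [Finset.mem_sdiff] at hx
            rw [Finset.mem_singleton]
            by_contra hxb
            exact hxb (hc x hx.1 hx.2)
          have hXL' : X.1 \ L.1 ⊆ {a} := by
            intro y hy
            rw [Finset.mem_sdiff] at hy
            rw [Finset.mem_singleton]
            by_contra hya
            exact hya (hr y hy.1 hy.2)
          have hXne : X.1 ≠ L.1 := fun h => hXL (Subtype.ext h)
          have hXLne : (X.1 \ L.1).Nonempty := by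
            rw [Finset.sdiff_nonempty]
            intro hsub
            exact hXne (Finset.eq_of_subset_of_card_le hsub (by rw [X.2, L.2]))
          have hLXne : (L.1 \ X.1).Nonempty := by
            rw [Finset.sdiff_nonempty]
            intro hsub
            exact hXne (Finset.eq_of_subset_of_card_le hsub (by rw [X.2, L.2])).symm
          have hXLa : X.1 \ L.1 = {a} := by
            rcases Finset.subset_singleton_iff.mp hXL' with h | h
            · exact absurd h (Finset.nonempty_iff_ne_empty.mp hXLne)
            · exact h
          have hLXb : L.1 \ X.1 = {b} := by
            rcases Finset.subset_singleton_iff.mp hLX with h | h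
            · exact absurd h (Finset.nonempty_iff_ne_empty.mp hLXne)
            · exact h
          have hbL : b ∈ L.1 := by
            have : b ∈ L.1 \ X.1 := hLXb ▸ Finset.mem_singleton_self b
            exact (Finset.mem_sdiff.mp this).1
          have hbX : b ∉ X.1 := by
            have : b ∈ L.1 \ X.1 := hLXb ▸ Finset.mem_singleton_self b
            exact (Finset.mem_sdiff.mp this).2
          have haX : a ∈ X.1 := by
            have : a ∈ X.1 \ L.1 := hXLa ▸ Finset.mem_singleton_self a
            exact (Finset.mem_sdiff.mp this).1
          have haL : a ∉ L.1 := by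
            have : a ∈ X.1 \ L.1 := hXLa ▸ Finset.mem_singleton_self a
            exact (Finset.mem_sdiff.mp this).2
          apply hcond
          refine ⟨hbL, haL, ?_⟩
          ext x
          rw [Finset.mem_insert, Finset.mem_erase]
          constructor
          · intro hx
            by_cases hxL : x ∈ L.1
            · right
              refine ⟨fun hxb => hbX (hxb ▸ hx), hxL⟩
            · left
              have : x ∈ X.1 \ L.1 := Finset.mem_sdiff.mpr ⟨hx, hxL⟩
              rw [hXLa, Finset.mem_singleton] at this
              exact this
          · rintro (hx | ⟨hxb, hxL⟩)
            · exact hx ▸ haX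
            · by_contra hxX
              have : x ∈ L.1 \ X.1 := Finset.mem_sdiff.mpr ⟨hxL, hxX⟩
              rw [hLXb, Finset.mem_singleton] at this
              exact hxb this

/-- The nilpotent part of `Λ^m t_{a,b}(λ)`. -/
noncomputable def mMat (R : Type) [CommRing R] (n m : ℕ) (a b : Fin n) (hab : a ≠ b) :
    Matrix (ExtIdx n m) (ExtIdx n m) R :=
  Matrix.of fun X L =>
    if b ∈ L.1 ∧ a ∉ L.1 ∧ X.1 = insert a (L.1.erase b) then eps R a b hab L else 0

lemma extPow_transvection_eq (a b : Fin n) (hab : a ≠ b) (lam : R) :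
    extPow R n m (Matrix.transvection a b lam) = 1 + lam • mMat R n m a b hab := by
  ext X L
  rw [extPow_transvection_apply a b hab lam X L, Matrix.add_apply, Matrix.smul_apply,
    Matrix.one_apply, mMat, Matrix.of_apply]
  rcases eq_or_ne X L with h | h
  · subst h
    rw [if_pos rfl, if_pos rfl]
    rw [if_neg (fun hc => hc.2.1 (hc.2.2 ▸ Finset.mem_insert_self a _)), smul_zero, add_zero]
  · rw [if_neg h, if_neg h]
    by_cases hcond : b ∈ L.1 ∧ a ∉ L.1 ∧ X.1 = insert a (L.1.erase b)
    · rw [if_pos hcond, if_pos hcond, zero_add, smul_eq_mul, mul_comm]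
    · rw [if_neg hcond, if_neg hcond, smul_zero, add_zero]

lemma mMat_mul_mMat (a b : Fin n) (hab : a ≠ b) :
    mMat R n m a b hab * mMat R n m a b hab = 0 := by
  ext X Z
  rw [Matrix.mul_apply, Matrix.zero_apply]
  apply Finset.sum_eq_zero
  intro Y _
  by_cases h2 : b ∈ Z.1 ∧ a ∉ Z.1 ∧ Y.1 = insert a (Z.1.erase b)
  · have h1 : ¬(b ∈ Y.1 ∧ a ∉ Y.1 ∧ X.1 = insert a (Y.1.erase b)) := by
      rintro ⟨hbY, -, -⟩
      rw [h2.2.2] at hbY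
      rcases Finset.mem_insert.mp hbY with h | h
      · exact hab h.symm
      · exact Finset.notMem_erase b Z.1 h
    rw [mMat, Matrix.of_apply, if_neg h1, zero_mul]
  · rw [mMat, Matrix.of_apply, Matrix.of_apply, if_neg h2, mul_zero]

lemma mMat_mul_stdBasisMatrix (a b : Fin n) (hab : a ≠ b) (I J : ExtIdx n m) (ξ : R)
    (hbI : b ∈ I.1) (haI : a ∉ I.1) :
    mMat R n m a b hab * Matrix.single I J ξ =
      eps R a b hab I • Matrix.single (swapIdx I b a hbI haI) J ξ := by
  ext X Z
  rcases eq_or_ne Z J with hZ | hZ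
  · subst hZ
    rw [Matrix.mul_single_apply_same, Matrix.smul_apply]
    rw [mMat, Matrix.of_apply]
    by_cases hX : X = swapIdx I b a hbI haI
    · subst hX
      rw [if_pos ⟨hbI, haI, rfl⟩, Matrix.single_apply_same, smul_eq_mul]
    · rw [if_neg (fun hc => hX (Subtype.ext hc.2.2)), zero_mul,
        Matrix.single_apply_of_ne _ _ _ _ _
          (fun hc : _ ∧ _ => hX hc.1.symm), smul_zero]
  · rw [Matrix.mul_single_apply_of_ne _ _ _ _ _ hZ, Matrix.smul_apply,
      Matrix.single_apply_of_ne _ _ _ _ _ (fun hc : _ ∧ _ => hZ hc.2.symm), smul_zero]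

lemma stdBasisMatrix_mul_mMat (a b : Fin n) (hab : a ≠ b) (I J : ExtIdx n m) (ξ : R)
    (haJ : a ∉ J.1) :
    Matrix.single I J ξ * mMat R n m a b hab = 0 := by
  ext X Z
  rcases eq_or_ne X I with hX | hX
  · subst hX
    rw [Matrix.single_mul_apply_same, mMat, Matrix.of_apply, Matrix.zero_apply]
    rw [if_neg (by
      rintro ⟨-, -, h3⟩
      apply haJ
      rw [h3]
      exact Finset.mem_insert_self a _), mul_zero]
  · rw [Matrix.single_mul_apply_of_ne _ _ _ _ _ hX, Matrix.zero_apply]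

lemma extPow_mul_extPow (a b : Fin n) (hab : a ≠ b) (lam : R) :
    extPow R n m (Matrix.transvection a b lam) * extPow R n m (Matrix.transvection a b (-lam))
      = 1 := by
  rw [extPow_transvection_eq a b hab lam, extPow_transvection_eq a b hab (-lam)]
  have hMM : mMat R n m a b hab * mMat R n m a b hab = 0 := mMat_mul_mMat a b hab
  simp only [mul_add, add_mul, mul_one, one_mul, smul_mul_assoc, mul_smul_comm, smul_smul,
    hMM, smul_zero, add_zero, zero_add, neg_mul, mul_neg, neg_smul, neg_neg]
  module

/-- `Λ^m t_{a,b}(λ)` as an element of `GL`. -/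
noncomputable def gU (R : Type) [CommRing R] (n m : ℕ) (a b : Fin n) (hab : a ≠ b) (lam : R) :
    GL (ExtIdx n m) R where
  val := extPow R n m (Matrix.transvection a b lam)
  inv := extPow R n m (Matrix.transvection a b (-lam))
  val_inv := extPow_mul_extPow a b hab lam
  inv_val := by
    have h := extPow_mul_extPow (R := R) (n := n) (m := m) a b hab (-lam)
    rwa [neg_neg] at h

lemma gU_mem (a b : Fin n) (hab : a ≠ b) (lam : R) :
    gU R n m a b hab lam ∈ extElem R n m :=
  Subgroup.subset_closure ⟨a, b, hab, lam, rfl⟩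

lemma stdBasisMatrix_neg (I J : ExtIdx n m) (ξ : R) :
    Matrix.single I J (-ξ) = -Matrix.single I J ξ := by
  ext X Z
  rw [Matrix.neg_apply, Matrix.single, Matrix.single, Matrix.of_apply,
    Matrix.of_apply]
  split <;> simp

/-- The key conjugation step: conjugating `t_{I,J}(ξ)` by `Λ^m t_{a,b}(λ)` and cancelling
produces `t_{I',J}(ε λ ξ)` where `I'` is `I` with `b` replaced by `a`. -/
lemma key (R : Type) [CommRing R] {n m : ℕ} (H : Subgroup (GL (ExtIdx n m) R))
    (hH : extElem R n m ≤ H) (I J : ExtIdx n m) (hIJ : I ≠ J)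
    (a b : Fin n) (hab : a ≠ b) (hbI : b ∈ I.1) (haI : a ∉ I.1) (haJ : a ∉ J.1)
    (hne : swapIdx I b a hbI haI ≠ J) (ξ lam : R) (ht : tGL R I J hIJ ξ ∈ H) :
    tGL R (swapIdx I b a hbI haI) J hne (eps R a b hab I * lam * ξ) ∈ H := by
  set g := gU R n m a b hab lam with hg
  set t := tGL R I J hIJ ξ with htdef
  have hmem : t⁻¹ * (g * t * g⁻¹) ∈ H :=
    mul_mem (inv_mem ht) (mul_mem (mul_mem (hH (gU_mem a b hab lam)) ht) (inv_mem (hH (gU_mem a b hab lam))))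
  have hval : (tGL R (swapIdx I b a hbI haI) J hne (eps R a b hab I * lam * ξ)) =
      t⁻¹ * (g * t * g⁻¹) := by
    apply Units.ext
    show Matrix.transvection (swapIdx I b a hbI haI) J (eps R a b hab I * lam * ξ) = _
    have hrhs : ((t⁻¹ * (g * t * g⁻¹) : GL (ExtIdx n m) R) : Matrix (ExtIdx n m) (ExtIdx n m) R)
        = Matrix.transvection I J (-ξ) *
          (extPow R n m (Matrix.transvection a b lam) * Matrix.transvection I J ξ *
            extPow R n m (Matrix.transvection a b (-lam))) := by
      rw [Units.val_mul, Units.val_mul, Units.val_mul]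
      rfl
    rw [hrhs, extPow_transvection_eq a b hab lam, extPow_transvection_eq a b hab (-lam),
      Matrix.transvection, Matrix.transvection, Matrix.transvection, stdBasisMatrix_neg]
    have hsm : Matrix.single (swapIdx I b a hbI haI) J (eps R a b hab I * lam * ξ)
        = (eps R a b hab I * lam) • Matrix.single (swapIdx I b a hbI haI) J ξ := by
      rw [Matrix.smul_single, smul_eq_mul]
    rw [hsm]
    set M := mMat R n m a b hab
    set D := Matrix.single I J ξ
    set D' := Matrix.single (swapIdx I b a hbI haI) J ξ
    set e := eps R a b hab I
    have hMM : M * M = 0 := mMat_mul_mMat a b hab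
    have hMD : M * D = e • D' := mMat_mul_stdBasisMatrix a b hab I J ξ hbI haI
    have hDM : D * M = 0 := stdBasisMatrix_mul_mMat a b hab I J ξ haJ
    have hD'M : D' * M = 0 := stdBasisMatrix_mul_mMat a b hab _ J ξ haJ
    have hDD : D * D = 0 := Matrix.single_mul_single_of_ne _ _ _ _ (fun h => hIJ h.symm) _
    have hDD' : D * D' = 0 := Matrix.single_mul_single_of_ne _ _ _ _ (fun h => hne h.symm) _
    simp only [mul_add, add_mul, mul_one, one_mul, neg_mul, mul_neg, smul_mul_assoc,
      mul_smul_comm, hMM, hMD, hDM, hD'M, hDD, hDD', smul_zero, neg_zero, add_zero, zero_add,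
      smul_smul, smul_neg, mul_zero, zero_mul]
    module
  rw [hval]
  exact hmem

end LevelAux

/-- For a subgroup `H` of `GL_N(R)` containing `Λ^m E_n(R)` and distinct weights
`I, J`, the set `A_{I,J} = {ξ ∈ R : t_{I,J}(ξ) ∈ H}` is an ideal of `R`. -/
theorem levelSet_isIdeal (R : Type) [CommRing R] (n m : ℕ)
    (hm1 : 1 ≤ m) (hnm : 3 * m ≤ n)
    (H : Subgroup (GL (ExtIdx n m) R)) (hH : extElem R n m ≤ H)
    (I J : ExtIdx n m) (hIJ : I ≠ J) :
    ∃ A : Ideal R, ∀ ξ : R, ξ ∈ A ↔ tGL R I J hIJ ξ ∈ H := by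
  classical
  refine ⟨{ carrier := {ξ : R | tGL R I J hIJ ξ ∈ H}
            add_mem' := ?_
            zero_mem' := ?_
            smul_mem' := ?_ }, fun ξ => Iff.rfl⟩
  · -- additive closure
    intro x y hx hy
    simp only [Set.mem_setOf_eq] at *
    have heq : tGL R I J hIJ (x + y) = tGL R I J hIJ x * tGL R I J hIJ y := by
      apply Units.ext
      rw [Units.val_mul]
      exact (Matrix.transvection_mul_transvection_same I J hIJ x y).symm
    rw [heq]
    exact mul_mem hx hy
  · -- zero
    simp only [Set.mem_setOf_eq]
    have heq : tGL R I J hIJ 0 = 1 := by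
      apply Units.ext
      show Matrix.transvection I J (0 : R) = _
      rw [Matrix.transvection_zero]
      rfl
    rw [heq]
    exact one_mem H
  · -- closure under scaling
    intro c ξ hξ
    simp only [Set.mem_setOf_eq, smul_eq_mul] at *
    -- choose b ∈ I \ J
    have hnefin : I.1 ≠ J.1 := fun h => hIJ (Subtype.ext h)
    have hdiff : (I.1 \ J.1).Nonempty := by
      rw [Finset.sdiff_nonempty]
      intro hsub
      exact hnefin (Finset.eq_of_subset_of_card_le hsub (le_of_eq (J.2.trans I.2.symm)))
    obtain ⟨b, hb⟩ := hdiff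
    rw [Finset.mem_sdiff] at hb
    obtain ⟨hbI, hbJ⟩ := hb
    -- choose a ∉ I ∪ J
    have hex : ∃ a : Fin n, a ∉ I.1 ∪ J.1 := by
      by_contra hcon
      push_neg at hcon
      have huniv : (Finset.univ : Finset (Fin n)) ⊆ I.1 ∪ J.1 := fun x _ => hcon x
      have hcard := Finset.card_le_card huniv
      rw [Finset.card_univ, Fintype.card_fin] at hcard
      have hle := Finset.card_union_le I.1 J.1
      rw [I.2, J.2] at hle
      omega
    obtain ⟨a, ha⟩ := hex
    rw [Finset.mem_union, not_or] at ha
    obtain ⟨haI, haJ⟩ := ha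
    have hab : a ≠ b := fun h => haI (h ▸ hbI)
    have haI' : a ∈ (swapIdx I b a hbI haI).1 := Finset.mem_insert_self a _
    have hbI' : b ∉ (swapIdx I b a hbI haI).1 := by
      intro hc
      rcases Finset.mem_insert.mp hc with h | h
      · exact hab h.symm
      · exact Finset.notMem_erase b I.1 h
    have hne1 : swapIdx I b a hbI haI ≠ J := fun h => haJ (by rw [← h]; exact haI')
    have step1 := LevelAux.key R H hH I J hIJ a b hab hbI haI haJ hne1 ξ
      (LevelAux.eps R a b hab I) hξ
    rw [LevelAux.eps_mul_self a b hab I, one_mul] at step1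
    have hI'' : swapIdx (swapIdx I b a hbI haI) a b haI' hbI' = I := by
      apply Subtype.ext
      show insert b (((swapIdx I b a hbI haI)).1.erase a) = I.1
      show insert b ((insert a (I.1.erase b)).erase a) = I.1
      rw [Finset.erase_insert (fun hc => haI (Finset.mem_of_mem_erase hc))]
      exact Finset.insert_erase hbI
    have hne2 : swapIdx (swapIdx I b a hbI haI) a b haI' hbI' ≠ J := by
      rw [hI'']; exact hIJ
    have step2 := LevelAux.key R H hH (swapIdx I b a hbI haI) J hne1 b a hab.symm haI' hbI'
      hbJ hne2 ξ (LevelAux.eps R b a hab.symm (swapIdx I b a hbI haI) * c) step1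
    have hpar : LevelAux.eps R b a hab.symm (swapIdx I b a hbI haI) *
        (LevelAux.eps R b a hab.symm (swapIdx I b a hbI haI) * c) * ξ = c * ξ := by
      rw [← mul_assoc, LevelAux.eps_mul_self, one_mul]
    have heq : tGL R (swapIdx (swapIdx I b a hbI haI) a b haI' hbI') J hne2
        (LevelAux.eps R b a hab.symm (swapIdx I b a hbI haI) *
          (LevelAux.eps R b a hab.symm (swapIdx I b a hbI haI) * c) * ξ)
        = tGL R I J hIJ (c * ξ) := by
      apply Units.ext
      show Matrix.transvection _ J _ = Matrix.transvection I J _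
      rw [hI'', hpar]
    rw [heq] at step2
    exact step2
end
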